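/- Let G be an r-regular simple graph with n vertices and m edges, where r ≥ 2 (so that m ≥ n), and let q_1 ≤ q_2 ≤ … ≤ q_n = 2r be the eigenvalues of Q(G) listed with multiplicity. Then f(λ, G^{0-1}) = [(λ-m)(λ-2m-n+4r-2) - mn]·(λ-m-n+2r-2)^{m-n}·(λ-m)^{n-1}·∏_{i=1}^{n-1}(λ - m - n - 2 + 2r + q_i). -/

import Mathlib

open Classical

/-- The four symbols `0, 1, +, -` used in `xyz`-transformations. -/
inductive XYZ : Type
  | zero | one | plus | minus

namespace XYZ

/-- The relation on the vertices of a graph `H` given by a symbol: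
`0` gives the empty graph, `1` the complete graph, `+` the graph itself,
`-` its complement. -/
def rel {W : Type*} (H : SimpleGraph W) : XYZ → W → W → Prop
  | .zero => fun _ _ => False
  | .one  => fun u v => u ≠ v
  | .plus => fun u v => H.Adj u v
  | .minus => fun u v => u ≠ v ∧ ¬ H.Adj u v

/-- The incidence relation between a vertex and an edge given by a symbol `z`:
`+` means incident, `-` means non-incident, `0` never, `1` always. -/
def inc {W : Type*} (G : SimpleGraph W) : XYZ → W → G.edgeSet → Prop
  | .zero => fun _ _ => False
  | .one  => fun _ _ => True
  | .plus => fun v e => v ∈ (e : Sym2 W)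
  | .minus => fun v e => v ∉ (e : Sym2 W)

theorem rel_symm {W : Type*} (H : SimpleGraph W) (x : XYZ) {u v : W}
    (h : rel H x u v) : rel H x v u := by
  cases x with
  | zero => exact h.elim
  | one => exact (h : u ≠ v).symm
  | plus => exact H.adj_symm h
  | minus => exact ⟨(h.1).symm, fun h' => h.2 (H.adj_symm h')⟩

theorem rel_irrefl {W : Type*} (H : SimpleGraph W) (x : XYZ) {u : W}
    (h : rel H x u u) : False := by
  cases x with
  | zero => exact h
  | one => exact h rfl
  | plus => exact H.irrefl h
  | minus => exact h.1 rfl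

end XYZ

/-- The `xyz`-transformation `G^{xyz}` of a graph `G`: its vertex set is
`V(G) ⊕ E(G)`; two vertices of `G` are adjacent according to the symbol `x`
(applied to `G`), two edges according to the symbol `y` (applied to the line
graph of `G`), and a vertex and an edge according to the symbol `z`
(`+` = incidence graph `B(G)`, `-` = non-incidence graph `B^c(G)`,
`0` = no vertex-edge edges, `1` = all vertex-edge edges). -/
def xyzTransform {V : Type*} (G : SimpleGraph V) (x y z : XYZ) :
    SimpleGraph (V ⊕ G.edgeSet) where
  Adj a b :=
    match a, b with
    | Sum.inl u, Sum.inl v => XYZ.rel G x u v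
    | Sum.inr e, Sum.inr f => XYZ.rel G.lineGraph y e f
    | Sum.inl v, Sum.inr e => XYZ.inc G z v e
    | Sum.inr e, Sum.inl v => XYZ.inc G z v e
  symm := by
    refine ⟨?_⟩
    rintro (u | e) (v | f) h
    · exact XYZ.rel_symm G x h
    · exact h
    · exact h
    · exact XYZ.rel_symm G.lineGraph y h
  loopless := by
    refine ⟨?_⟩
    rintro (u | e) h
    · exact XYZ.rel_irrefl G x h
    · exact XYZ.rel_irrefl G.lineGraph y h

/-- The signless Laplacian matrix `Q(G) = D(G) + A(G)` of a graph. -/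
noncomputable def signlessLaplacian {V : Type*} [Fintype V] (G : SimpleGraph V) :
    Matrix V V ℝ :=
  Matrix.of fun u v =>
    (if u = v then (G.degree u : ℝ) else 0) + (if G.Adj u v then 1 else 0)

/-- The signless Laplacian characteristic polynomial
`f(λ, G) = det (λ I - Q(G))`, evaluated at a real number `λ`. -/
noncomputable def fQ {V : Type*} [Fintype V] (G : SimpleGraph V) (lam : ℝ) : ℝ :=
  Matrix.det (lam • (1 : Matrix V V ℝ) - signlessLaplacian G)


open Matrix Polynomial

namespace AuxQZM1
variable {V : Type*} [Fintype V] (G : SimpleGraph V)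

noncomputable def incB : Matrix V G.edgeSet ℝ :=
  Matrix.of fun v e => if v ∈ (e : Sym2 V) then 1 else 0

lemma incB_apply (v : V) (e : G.edgeSet) :
    incB G v e = if v ∈ (e : Sym2 V) then 1 else 0 := rfl

lemma sum_edge (f : Sym2 V → ℝ) :
    ∑ e : G.edgeSet, f (e : Sym2 V) = ∑ e ∈ G.edgeFinset, f e :=
  (Finset.sum_subtype _ (fun x => G.mem_edgeFinset) f).symm

lemma rowsum (v : V) : ∑ e : G.edgeSet, incB G v e = (G.degree v : ℝ) := by
  classical
  have h1 : ∑ e : G.edgeSet, incB G v e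
      = ∑ e ∈ G.edgeFinset, (if v ∈ e then (1:ℝ) else 0) := by
    rw [← sum_edge G (fun e => if v ∈ e then (1:ℝ) else 0)]
    rfl
  rw [h1, Finset.sum_boole]
  have h2 : G.edgeFinset.filter (fun e => v ∈ e) = G.incidenceFinset v := by
    ext e
    simp [SimpleGraph.mem_incidenceFinset, SimpleGraph.incidenceSet,
      SimpleGraph.mem_edgeFinset, and_comm]
  rw [h2]
  norm_num [SimpleGraph.card_incidenceFinset_eq_degree]

lemma colsum (e : G.edgeSet) : ∑ v : V, incB G v e = 2 := by
  classical
  obtain ⟨e, he⟩ := e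
  induction e with
  | _ a b =>
    have hab : a ≠ b := G.ne_of_adj (G.mem_edgeSet.mp he)
    have : ∀ v : V, incB G v ⟨s(a,b), he⟩
        = (if v = a then (1:ℝ) else 0) + (if v = b then 1 else 0) := by
      intro v
      rw [incB_apply]
      by_cases hva : v = a <;> by_cases hvb : v = b <;>
        simp_all [Sym2.mem_iff]
    simp only [this, Finset.sum_add_distrib, Finset.sum_ite_eq', Finset.mem_univ,
      if_true]
    norm_num

lemma bbT : incB G * (incB G)ᵀ = signlessLaplacian G := by
  classical
  ext u w
  rw [Matrix.mul_apply]
  by_cases huw : u = w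
  · subst huw
    have h1 : ∀ e : G.edgeSet, incB G u e * (incB G)ᵀ e u = incB G u e := by
      intro e
      rw [Matrix.transpose_apply, incB_apply]
      split <;> simp
    rw [Finset.sum_congr rfl (fun e _ => h1 e), rowsum]
    simp [signlessLaplacian]
  · have h1 : ∀ e : G.edgeSet, incB G u e * (incB G)ᵀ e w
        = if (e : Sym2 V) = s(u, w) then 1 else 0 := by
      intro e
      rw [Matrix.transpose_apply, incB_apply, incB_apply]
      by_cases h2 : u ∈ (e : Sym2 V) <;> by_cases h3 : w ∈ (e : Sym2 V)
      · rw [if_pos h2, if_pos h3, if_pos ((Sym2.mem_and_mem_iff huw).mp ⟨h2, h3⟩)]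
        norm_num
      all_goals
        have : ¬ (e : Sym2 V) = s(u, w) := by
          intro h; rw [h] at h2 h3; simp only [Sym2.mem_iff] at h2 h3; tauto
        simp_all
    rw [Finset.sum_congr rfl (fun e _ => h1 e),
      sum_edge G (fun e => if e = s(u,w) then (1:ℝ) else 0), Finset.sum_ite_eq']
    simp [signlessLaplacian, huw, SimpleGraph.mem_edgeFinset]

lemma bTb (e f : G.edgeSet) : ((incB G)ᵀ * incB G) e f
    = if e = f then 2 else if G.lineGraph.Adj e f then 1 else 0 := by
  classical
  rw [Matrix.mul_apply]
  by_cases hef : e = f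
  · subst hef
    have h1 : ∀ v : V, (incB G)ᵀ e v * incB G v e = incB G v e := by
      intro v; rw [Matrix.transpose_apply, incB_apply]; split <;> simp
    rw [Finset.sum_congr rfl (fun v _ => h1 v), colsum]
    simp
  · rw [if_neg hef]
    by_cases hx : ∃ w : V, w ∈ (e : Sym2 V) ∧ w ∈ (f : Sym2 V)
    · obtain ⟨w, hw1, hw2⟩ := hx
      have hadj : G.lineGraph.Adj e f := by
        rw [SimpleGraph.lineGraph_adj_iff_exists]
        exact ⟨hef, w, hw1, hw2⟩
      have h1 : ∀ v : V, (incB G)ᵀ e v * incB G v f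
          = if v = w then 1 else 0 := by
        intro v
        rw [Matrix.transpose_apply, incB_apply, incB_apply]
        by_cases hvw : v = w
        · subst hvw; rw [if_pos hw1, if_pos hw2, if_pos rfl]; norm_num
        · rw [if_neg hvw]
          by_cases h2 : v ∈ (e : Sym2 V) <;> by_cases h3 : v ∈ (f : Sym2 V)
          · exfalso
            apply hef
            have he' : (e : Sym2 V) = s(v, w) := (Sym2.mem_and_mem_iff hvw).mp ⟨h2, hw1⟩
            have hf' : (f : Sym2 V) = s(v, w) := (Sym2.mem_and_mem_iff hvw).mp ⟨h3, hw2⟩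
            exact Subtype.ext (he'.trans hf'.symm)
          all_goals simp_all
      rw [Finset.sum_congr rfl (fun v _ => h1 v), if_pos hadj]
      simp
    · have hadj : ¬ G.lineGraph.Adj e f := by
        rw [SimpleGraph.lineGraph_adj_iff_exists]
        push_neg
        intro _
        push_neg at hx
        exact hx
      have h1 : ∀ v : V, (incB G)ᵀ e v * incB G v f = 0 := by
        intro v
        rw [Matrix.transpose_apply, incB_apply, incB_apply]
        by_cases h2 : v ∈ (e : Sym2 V) <;> by_cases h3 : v ∈ (f : Sym2 V) <;>
          first
          | (exact absurd ⟨h2, h3⟩ (by push_neg at hx ⊢; intro h; exact hx v h))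
          | simp_all
      rw [Finset.sum_congr rfl (fun v _ => h1 v), if_neg hadj]
      simp

section Deg
variable {V : Type*} [Fintype V] (G : SimpleGraph V)

lemma degree_cast {W : Type*} [Fintype W] (H : SimpleGraph W) (x : W) :
    (H.degree x : ℝ) = ∑ y : W, if H.Adj x y then 1 else 0 := by
  classical
  have h : H.neighborFinset x = Finset.univ.filter (H.Adj x) := by
    ext; simp
  rw [SimpleGraph.degree, h, Finset.sum_boole]

lemma rowsum2r {r : ℕ} (hreg : G.IsRegularOfDegree r) (e : G.edgeSet) :
    ∑ f : G.edgeSet, ((incB G)ᵀ * incB G) e f = 2 * r := by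
  classical
  have h : ∀ f : G.edgeSet, ((incB G)ᵀ * incB G) e f
      = ∑ v : V, incB G v e * incB G v f := by
    intro f; rw [Matrix.mul_apply]; rfl
  rw [Finset.sum_congr rfl (fun f _ => h f), Finset.sum_comm]
  have h2 : ∀ v : V, ∑ f : G.edgeSet, incB G v e * incB G v f
      = incB G v e * r := by
    intro v
    rw [← Finset.mul_sum, rowsum, hreg v]
  rw [Finset.sum_congr rfl (fun v _ => h2 v), ← Finset.sum_mul, colsum]

lemma line_deg_sum {r : ℕ} (hreg : G.IsRegularOfDegree r) (hr2 : 2 ≤ r) (e : G.edgeSet) :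
    ∑ f : G.edgeSet, (if G.lineGraph.Adj e f then (1:ℝ) else 0) = 2 * r - 2 := by
  classical
  have h := rowsum2r G hreg e
  have h2 : ∀ f : G.edgeSet, ((incB G)ᵀ * incB G) e f
      = (if e = f then (2:ℝ) else 0) + (if G.lineGraph.Adj e f then 1 else 0) := by
    intro f
    rw [bTb]
    by_cases hef : e = f
    · subst hef; simp [SimpleGraph.irrefl]
    · simp [hef]
  rw [Finset.sum_congr rfl (fun f _ => h2 f), Finset.sum_add_distrib,
    Finset.sum_ite_eq] at h
  simp only [Finset.mem_univ, if_true] at h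
  linarith

end Deg
section Blocks
variable {V : Type*} [Fintype V] (G : SimpleGraph V)

lemma T_deg_inl {n m : ℕ} (hn : Fintype.card V = n) (hm : Fintype.card G.edgeSet = m)
    (v : V) :
    ((xyzTransform G XYZ.zero XYZ.minus XYZ.one).degree (Sum.inl v) : ℝ) = m := by
  classical
  rw [degree_cast, Fintype.sum_sum_type]
  have h1 : ∀ u : V,
      (if (xyzTransform G XYZ.zero XYZ.minus XYZ.one).Adj (Sum.inl v) (Sum.inl u)
        then (1:ℝ) else 0) = 0 := by
    intro u
    simp [xyzTransform, XYZ.rel]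
  have h2 : ∀ e : G.edgeSet,
      (if (xyzTransform G XYZ.zero XYZ.minus XYZ.one).Adj (Sum.inl v) (Sum.inr e)
        then (1:ℝ) else 0) = 1 := by
    intro e
    simp [xyzTransform, XYZ.inc]
  rw [Finset.sum_congr rfl (fun u _ => h1 u), Finset.sum_congr rfl (fun e _ => h2 e)]
  simp [hm]

lemma T_deg_inr {r n m : ℕ} (hn : Fintype.card V = n) (hm : Fintype.card G.edgeSet = m)
    (hreg : G.IsRegularOfDegree r) (hr2 : 2 ≤ r) (e : G.edgeSet) :
    ((xyzTransform G XYZ.zero XYZ.minus XYZ.one).degree (Sum.inr e) : ℝ)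
      = n + m - 2 * r + 1 := by
  classical
  rw [degree_cast, Fintype.sum_sum_type]
  have h1 : ∀ u : V,
      (if (xyzTransform G XYZ.zero XYZ.minus XYZ.one).Adj (Sum.inr e) (Sum.inl u)
        then (1:ℝ) else 0) = 1 := by
    intro u; simp [xyzTransform, XYZ.inc]
  have h2 : ∀ f : G.edgeSet,
      (if (xyzTransform G XYZ.zero XYZ.minus XYZ.one).Adj (Sum.inr e) (Sum.inr f)
        then (1:ℝ) else 0)
      = 1 - (if e = f then 1 else 0) - (if G.lineGraph.Adj e f then 1 else 0) := by
    intro f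
    have hAdj : (xyzTransform G XYZ.zero XYZ.minus XYZ.one).Adj (Sum.inr e) (Sum.inr f)
        ↔ (e ≠ f ∧ ¬ G.lineGraph.Adj e f) := Iff.rfl
    by_cases hef : e = f
    · subst hef
      simp [hAdj, SimpleGraph.irrefl]
    · by_cases hadj : G.lineGraph.Adj e f
      · simp [hAdj, hef, hadj]
      · simp [hAdj, hef, hadj]
  rw [Finset.sum_congr rfl (fun u _ => h1 u), Finset.sum_congr rfl (fun f _ => h2 f)]
  simp only [Finset.sum_sub_distrib, Finset.sum_const, Finset.card_univ, hm, hn,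
    Finset.sum_ite_eq, Finset.mem_univ, if_true, nsmul_eq_mul, mul_one]
  rw [line_deg_sum G hreg hr2 e]
  ring

lemma blocks (r n m : ℕ) (hn : Fintype.card V = n) (hm : Fintype.card G.edgeSet = m)
    (hreg : G.IsRegularOfDegree r) (hr2 : 2 ≤ r) (lam : ℝ) :
    lam • (1 : Matrix (V ⊕ G.edgeSet) (V ⊕ G.edgeSet) ℝ)
        - signlessLaplacian (xyzTransform G XYZ.zero XYZ.minus XYZ.one)
      = Matrix.fromBlocks ((lam - m) • 1) (-(Matrix.of fun _ _ => (1:ℝ)))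
          (-(Matrix.of fun _ _ => (1:ℝ)))
          ((lam - m - n + 2 * r - 2) • 1 + (incB G)ᵀ * incB G
            - Matrix.of fun _ _ => (1:ℝ)) := by
  classical
  ext i j
  rcases i with u | e <;> rcases j with v | f
  · by_cases huv : u = v
    · subst huv
      have h1 : (signlessLaplacian (xyzTransform G XYZ.zero XYZ.minus XYZ.one))
          (Sum.inl u) (Sum.inl u)
          = ((xyzTransform G XYZ.zero XYZ.minus XYZ.one).degree (Sum.inl u) : ℝ) := by
        simp [signlessLaplacian, SimpleGraph.irrefl]
      rw [Matrix.sub_apply, h1, T_deg_inl G hn hm u]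
      simp [Matrix.one_apply]
    · simp [signlessLaplacian, Matrix.one_apply, huv, xyzTransform, XYZ.rel]
  · simp [signlessLaplacian, Matrix.one_apply, xyzTransform, XYZ.inc]
  · simp [signlessLaplacian, Matrix.one_apply, xyzTransform, XYZ.inc]
  · by_cases hef : e = f
    · subst hef
      simp [signlessLaplacian, Matrix.one_apply, SimpleGraph.irrefl, bTb,
        T_deg_inr G hn hm hreg hr2 e]
      ring
    · have : ((incB G)ᵀ * incB G) e f = if G.lineGraph.Adj e f then 1 else 0 := by
        rw [bTb, if_neg hef]
      by_cases hadj : G.lineGraph.Adj e f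
      · simp [signlessLaplacian, Matrix.one_apply, xyzTransform, XYZ.rel, hef, hadj, this]
      · simp [signlessLaplacian, Matrix.one_apply, xyzTransform, XYZ.rel, hef, hadj, this]

end Blocks
lemma assemble (a c twoR mR N P' cpow : ℝ) (k2 : ℕ)
    (ha : a ≠ 0) (hc2 : c + twoR ≠ 0) :
    a ^ (k2 + 1) * (cpow * ((c + twoR) * P') * (1 - ((1 + N / a) / (c + twoR)) * mR))
      = (a * (c + twoR - mR) - mR * N) * cpow * a ^ k2 * P' := by
  rw [pow_succ]
  field_simp
  ring

section Main
variable {V : Type*} [Fintype V] (G : SimpleGraph V)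

lemma main_pointwise (r n' m : ℕ)
    (hn : Fintype.card V = n' + 1) (hm : Fintype.card G.edgeSet = m)
    (hreg : G.IsRegularOfDegree r) (hr2 : 2 ≤ r)
    (q : Fin (n' + 1) → ℝ)
    (hlast : q ⟨n' + 1 - 1, by omega⟩ = 2 * r)
    (hq : ∀ x : ℝ, fQ G x = ∏ i : Fin (n' + 1), (x - q i))
    (lam : ℝ)
    (ha : lam - m ≠ 0)
    (hc : lam - m - (n' + 1 : ℕ) + 2 * r - 2 ≠ 0)
    (hc2 : lam - m - (n' + 1 : ℕ) + 4 * r - 2 ≠ 0) :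
    fQ (xyzTransform G XYZ.zero XYZ.minus XYZ.one) lam =
      ((lam - m) * (lam - 2 * m - (n' + 1 : ℕ) + 4 * r - 2) - m * (n' + 1 : ℕ)) *
        (lam - m - (n' + 1 : ℕ) + 2 * r - 2) ^ (m - (n' + 1)) * (lam - m) ^ n' *
        ∏ i : Fin n',
          (lam - m - (n' + 1 : ℕ) - 2 + 2 * r + q (Fin.castLE (by omega) i)) := by
  classical
  -- abbreviations (not `set`, to keep `ring` happy at the end)
  have hzero : ∀ x : V ⊕ G.edgeSet, True := fun _ => trivial
  -- handshake : m ≥ n'+1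
  have hedge : G.edgeFinset.card = m := by
    rw [SimpleGraph.edgeFinset_card]; exact hm
  have hhs : (n' + 1) * r = 2 * m := by
    have h := G.sum_degrees_eq_twice_card_edges
    rw [Finset.sum_congr rfl (fun v _ => hreg v), Finset.sum_const, Finset.card_univ,
      hn, hedge, smul_eq_mul] at h
    exact h
  have hnm : n' + 1 ≤ m := by nlinarith
  -- names
  set a : ℝ := lam - (m:ℝ) with hadef
  set c : ℝ := lam - (m:ℝ) - ((n' + 1 : ℕ) : ℝ) + 2 * r - 2 with hcdef
  have hc2' : c + 2 * (r:ℝ) ≠ 0 := by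
    rw [hcdef]
    intro h0
    apply hc2
    linarith
  set B : Matrix V G.edgeSet ℝ := incB G with hBdef
  set Jve : Matrix V G.edgeSet ℝ := Matrix.of fun _ _ => 1 with hJve
  set Jev : Matrix G.edgeSet V ℝ := Matrix.of fun _ _ => 1 with hJev
  set Je : Matrix G.edgeSet G.edgeSet ℝ := Matrix.of fun _ _ => 1 with hJe
  set X : Matrix G.edgeSet G.edgeSet ℝ := c • 1 + Bᵀ * B with hXdef
  set t : ℝ := 1 + ((n' + 1 : ℕ) : ℝ) / a with htdef
  set s : ℝ := t / (c + 2 * r) with hsdef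
  have hblocks := blocks G r (n' + 1) m hn hm hreg hr2 lam
  letI : Invertible (a • (1 : Matrix V V ℝ)) :=
    ⟨a⁻¹ • (1 : Matrix V V ℝ),
     by rw [smul_mul_assoc, one_mul, smul_smul, inv_mul_cancel₀ ha, one_smul],
     by rw [smul_mul_assoc, one_mul, smul_smul, mul_inv_cancel₀ ha, one_smul]⟩
  have hinv : ⅟(a • (1 : Matrix V V ℝ)) = a⁻¹ • 1 := rfl
  -- step 1 : Schur complement
  have hJJ : Jev * Jve = ((n' + 1 : ℕ) : ℝ) • Je := by
    ext e u
    simp [hJev, hJve, hJe, Matrix.mul_apply, hn]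
  have hCB : (-Jev) * ⅟(a • (1 : Matrix V V ℝ)) * (-Jve)
      = (a⁻¹ * ((n' + 1 : ℕ) : ℝ)) • Je := by
    rw [hinv, Matrix.mul_smul, Matrix.mul_one, Matrix.smul_mul, Matrix.neg_mul, Matrix.mul_neg, neg_neg, hJJ,
      smul_smul]
  have hSchur : (c • 1 + Bᵀ * B - Je) - (-Jev) * ⅟(a • (1 : Matrix V V ℝ)) * (-Jve)
      = X - t • Je := by
    rw [hCB]
    ext e f
    simp only [hXdef, hJe, htdef, Matrix.sub_apply, Matrix.add_apply, Matrix.smul_apply,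
      Matrix.of_apply, smul_eq_mul]
    field_simp
    ring
  -- step 2 : `X * Je = (c + 2r) • Je`
  have hXJ : X * Je = (c + 2 * r) • Je := by
    ext e g
    rw [Matrix.mul_apply]
    have h1 : ∀ f : G.edgeSet, X e f * Je f g
        = (if e = f then c else 0) + ((incB G)ᵀ * incB G) e f := by
      intro f
      simp only [hXdef, hJe, hBdef, Matrix.add_apply, Matrix.smul_apply, Matrix.one_apply,
        Matrix.of_apply, mul_one, smul_eq_mul, mul_ite, mul_zero]
    rw [Finset.sum_congr rfl (fun f _ => h1 f), Finset.sum_add_distrib,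
      Finset.sum_ite_eq, rowsum2r G hreg e]
    simp [hJe]
  -- step 3 : factor out
  have hfac : X - t • Je = X * (1 - s • Je) := by
    rw [Matrix.mul_sub, Matrix.mul_one, mul_smul_comm, hXJ, smul_smul]
    congr 2
    exact (div_mul_cancel₀ t hc2').symm
  -- step 4 : det (1 - s•Je) = 1 - s*m
  have hdetre : ((1 : Matrix G.edgeSet G.edgeSet ℝ) - s • Je).det = 1 - s * m := by
    have h1 : (1 : Matrix G.edgeSet G.edgeSet ℝ) - s • Je
        = 1 + Matrix.replicateCol Unit (fun _ => -s) * Matrix.replicateRow Unit (fun _ => (1:ℝ)) := by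
      ext e f
      simp [Matrix.mul_apply, hJe, sub_eq_add_neg]
    rw [h1, Matrix.det_one_add_replicateCol_mul_replicateRow]
    simp [dotProduct, hm]
    ring
  -- step 5 : det X
  have hX1 : X = c • (1 + (c⁻¹ • Bᵀ) * B) := by
    rw [Matrix.smul_mul, smul_add, smul_smul, mul_inv_cancel₀ hc, one_smul, hXdef]
  have hdetX : X.det = c ^ (m - (n' + 1)) * ∏ i : Fin (n' + 1), (c + q i) := by
    rw [hX1, Matrix.det_smul, Matrix.det_one_add_mul_comm]
    have h2 : (1 : Matrix V V ℝ) + B * (c⁻¹ • Bᵀ) = c⁻¹ • (c • 1 + B * Bᵀ) := by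
      rw [Matrix.mul_smul, smul_add, smul_smul, inv_mul_cancel₀ hc, one_smul]
    rw [h2, Matrix.det_smul, hBdef, bbT]
    have h3 : c • (1 : Matrix V V ℝ) + signlessLaplacian G
        = -(((-c) • 1) - signlessLaplacian G) := by
      rw [neg_sub, neg_smul, sub_neg_eq_add, add_comm]
    rw [h3, Matrix.det_neg]
    have h4 : ((-c) • (1 : Matrix V V ℝ) - signlessLaplacian G).det = fQ G (-c) := rfl
    rw [h4, hq, hm, hn]
    have h5 : ((-1:ℝ)) ^ (n' + 1) * ∏ i : Fin (n' + 1), (-c - q i)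
        = ∏ i : Fin (n' + 1), (c + q i) := by
      have h5' : ∏ i : Fin (n' + 1), (c + q i)
          = ∏ i : Fin (n' + 1), ((-1 : ℝ) * (-c - q i)) :=
        Finset.prod_congr rfl (fun i _ => by ring)
      rw [h5', Finset.prod_mul_distrib, Finset.prod_const, Finset.card_univ,
        Fintype.card_fin]
    have h6 : (c : ℝ) ^ m * (c⁻¹) ^ (n' + 1) = c ^ (m - (n' + 1)) := by
      rw [pow_sub₀ c hc hnm, inv_pow]
    rw [← mul_assoc, h6, h5]
  have hsplit : ∏ i : Fin (n' + 1), (c + q i)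
      = (c + 2 * r) * ∏ i : Fin n', (c + q (Fin.castLE (by omega) i)) := by
    rw [Fin.prod_univ_castSucc]
    have hl : q (Fin.last n') = 2 * (r : ℝ) := hlast
    rw [hl, mul_comm]
    rfl
  -- fold the block identity
  rw [← hadef, ← hcdef, ← hBdef, ← hJve, ← hJev, ← hJe] at hblocks
  have hgoal : fQ (xyzTransform G XYZ.zero XYZ.minus XYZ.one) lam
      = a ^ (n' + 1) * ((c ^ (m - (n' + 1)) *
          ((c + 2 * r) * ∏ i : Fin n', (c + q (Fin.castLE (by omega) i)))) *
            (1 - s * m)) := by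
    have hgoal1 : fQ (xyzTransform G XYZ.zero XYZ.minus XYZ.one) lam
        = (Matrix.fromBlocks (a • 1) (-Jve) (-Jev)
            (c • 1 + Bᵀ * B - Je)).det := by
      unfold fQ
      congr 1
      ext i j
      have h := congrFun (congrFun hblocks i) j
      simpa [Matrix.one_apply, Matrix.sub_apply, Matrix.smul_apply] using h
    rw [hgoal1, Matrix.det_fromBlocks₁₁, hSchur, hfac, Matrix.det_mul, hdetre,
      Matrix.det_smul, Matrix.det_one, mul_one, hn, hdetX, hsplit]
  rw [hgoal]
  have hPe : ∀ i : Fin n',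
      lam - m - ((n' + 1 : ℕ) : ℝ) - 2 + 2 * r + q (Fin.castLE (by omega) i)
        = c + q (Fin.castLE (by omega) i) := by
    intro i
    rw [hcdef]
    ring
  rw [Finset.prod_congr rfl (fun i _ => hPe i)]
  have hF1 : lam - 2 * (m:ℝ) - ((n' + 1 : ℕ) : ℝ) + 4 * r - 2 = c + 2 * r - m := by
    rw [hcdef]; ring
  rw [hF1, hsdef, htdef]
  exact assemble a c (2 * r) m ((n' + 1 : ℕ) : ℝ)
    (∏ i : Fin n', (c + q (Fin.castLE (by omega) i))) (c ^ (m - (n' + 1))) n' ha hc2'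

lemma fQ_poly {W : Type*} [Fintype W] (H : SimpleGraph W) :
    ∃ P : Polynomial ℝ, ∀ x : ℝ, fQ H x = Polynomial.eval x P := by
  refine ⟨Matrix.det ((Polynomial.X : Polynomial ℝ) • 1
    - (signlessLaplacian H).map Polynomial.C), fun x => ?_⟩
  have h1 : Polynomial.eval x (Matrix.det ((Polynomial.X : Polynomial ℝ) • 1
      - (signlessLaplacian H).map Polynomial.C))
      = Matrix.det ((((Polynomial.X : Polynomial ℝ) • 1
        - (signlessLaplacian H).map Polynomial.C)).map (Polynomial.evalRingHom x)) := by
    simpa using RingHom.map_det (Polynomial.evalRingHom x)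
      ((Polynomial.X : Polynomial ℝ) • 1 - (signlessLaplacian H).map Polynomial.C)
  rw [h1]
  unfold fQ
  congr 1
  ext i j
  by_cases hij : i = j <;>
    simp [Matrix.map_apply, Matrix.one_apply, hij]

end Main

end AuxQZM1

open AuxQZM1 in
theorem signless_charpoly_xyz_zm1 {V : Type*} [Fintype V] (G : SimpleGraph V) (r n m : ℕ)
    (hn : Fintype.card V = n) (hm : Fintype.card G.edgeSet = m)
    (hreg : G.IsRegularOfDegree r) (hr2 : 2 ≤ r) (hn0 : 0 < n)
    (q : Fin n → ℝ) (hmono : Monotone q)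
    (hlast : q ⟨n - 1, by omega⟩ = 2 * r)
    (hq : ∀ x : ℝ, fQ G x = ∏ i : Fin n, (x - q i)) :
    ∀ lam : ℝ,
      fQ (xyzTransform G XYZ.zero XYZ.minus XYZ.one) lam =
        ((lam - m) * (lam - 2 * m - n + 4 * r - 2) - m * n) *
          (lam - m - n + 2 * r - 2) ^ (m - n) * (lam - m) ^ (n - 1) *
          ∏ i : Fin (n - 1), (lam - m - n - 2 + 2 * r + q (Fin.castLE (Nat.sub_le n 1) i)) := by
  classical
  obtain ⟨n', rfl⟩ : ∃ n', n = n' + 1 := ⟨n - 1, by omega⟩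
  intro lam
  show fQ (xyzTransform G XYZ.zero XYZ.minus XYZ.one) lam =
      ((lam - m) * (lam - 2 * m - (n' + 1 : ℕ) + 4 * r - 2) - m * (n' + 1 : ℕ)) *
        (lam - m - (n' + 1 : ℕ) + 2 * r - 2) ^ (m - (n' + 1)) * (lam - m) ^ n' *
        ∏ i : Fin n',
          (lam - m - (n' + 1 : ℕ) - 2 + 2 * r + q (Fin.castLE (Nat.le_succ n') i))
  obtain ⟨P, hP⟩ := fQ_poly (xyzTransform G XYZ.zero XYZ.minus XYZ.one)
  set R : Polynomial ℝ :=
    ((Polynomial.X - Polynomial.C (m:ℝ)) *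
        (Polynomial.X - Polynomial.C (2*(m:ℝ) + ((n' + 1 : ℕ):ℝ) - 4*r + 2))
      - Polynomial.C ((m:ℝ) * ((n' + 1 : ℕ):ℝ))) *
      (Polynomial.X - Polynomial.C ((m:ℝ) + ((n' + 1 : ℕ):ℝ) - 2*r + 2)) ^ (m - (n' + 1)) *
      (Polynomial.X - Polynomial.C (m:ℝ)) ^ n' *
      ∏ i : Fin n', (Polynomial.X +
        Polynomial.C (2*(r:ℝ) + q (Fin.castLE (Nat.le_succ n') i) - m - ((n' + 1 : ℕ):ℝ) - 2))
    with hR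
  have hevalR : ∀ x : ℝ, Polynomial.eval x R =
      ((x - m) * (x - 2 * m - (n' + 1 : ℕ) + 4 * r - 2) - m * (n' + 1 : ℕ)) *
        (x - m - (n' + 1 : ℕ) + 2 * r - 2) ^ (m - (n' + 1)) * (x - m) ^ n' *
        ∏ i : Fin n',
          (x - m - (n' + 1 : ℕ) - 2 + 2 * r + q (Fin.castLE (Nat.le_succ n') i)) := by
    intro x
    rw [hR]
    simp only [Polynomial.eval_mul, Polynomial.eval_sub, Polynomial.eval_add,
      Polynomial.eval_pow, Polynomial.eval_X, Polynomial.eval_C, Polynomial.eval_prod]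
    have hp : ∀ i : Fin n',
        x + (2*(r:ℝ) + q (Fin.castLE (Nat.le_succ n') i) - m - ((n' + 1 : ℕ):ℝ) - 2)
          = x - m - ((n' + 1 : ℕ):ℝ) - 2 + 2*r + q (Fin.castLE (Nat.le_succ n') i) := by
      intro i; ring
    rw [Finset.prod_congr rfl (fun i _ => hp i)]
    ring
  have hPR : P = R := by
    apply Polynomial.eq_of_infinite_eval_eq
    have hsub : ({(m:ℝ), (m:ℝ) + ((n' + 1 : ℕ):ℝ) - 2*r + 2,
        (m:ℝ) + ((n' + 1 : ℕ):ℝ) - 4*r + 2} : Set ℝ)ᶜ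
        ⊆ { x : ℝ | Polynomial.eval x P = Polynomial.eval x R } := by
      intro x hx
      simp only [Set.mem_compl_iff, Set.mem_insert_iff, Set.mem_singleton_iff, not_or] at hx
      obtain ⟨hx1, hx2, hx3⟩ := hx
      have h1 : x - (m:ℝ) ≠ 0 := by
        intro h0; apply hx1; linarith
      have h2 : x - (m:ℝ) - ((n' + 1 : ℕ):ℝ) + 2*r - 2 ≠ 0 := by
        intro h0; apply hx2; linarith
      have h3 : x - (m:ℝ) - ((n' + 1 : ℕ):ℝ) + 4*r - 2 ≠ 0 := by
        intro h0; apply hx3; linarith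
      have hmain := main_pointwise G r n' m hn hm hreg hr2 q hlast hq x h1 h2 h3
      simp only [Set.mem_setOf_eq]
      rw [← hP, hmain, hevalR]
    exact Set.Infinite.mono hsub
      ((Set.Finite.infinite_compl (by
        exact (Set.finite_singleton _).insert _ |>.insert _)))
  rw [hP, hPR, hevalR]
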